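/- Consider the non-local 1-D parabolic PDE ∂u/∂t(t,x) = κ(u[t])·∂²u/∂x²(t,x) + f(t,x) on (0,T] × [0,1] with boundary conditions ∂u/∂x(t,0) = (λ₀ + β₀(u[t]))·u(t,0) + d₀(t) and ∂u/∂x(t,1) = −(λ₁ + β₁(u[t]))·u(t,1) + d₁(t), where d₀, d₁ ∈ C⁰([0,T]), f ∈ C⁰([0,T] × [0,1]), κ is a functional on state profiles with κ(v) ≥ κ* > 0 for all profiles v, β₀, β₁ are non-negative functionals on C⁰([0,1]), and λ₀, λ₁ > 0 are constants. Let θ ∈ (0, π/2) satisfy θ·tan(θ) < λ₁ and set η(x) := cos(θx). Then every classical solution u ∈ C⁰([0,T] × [0,1]) ∩ C¹((0,T] × [0,1]) with u[t] ∈ C²([0,1]) for t ∈ (0,T] satisfies, for all ζ ∈ [0, κ*θ²) and t ∈ (0,T]: ‖u[t]‖_{∞,η} ≤ max( exp(−ζt)·‖u[0]‖_{∞,η}, sup_{0<s≤t} max( |d₀(s)|/λ₀, |d₁(s)|/(λ₁·cos(θ) − θ·sin(θ)), ‖f[s]‖_{∞,η}/(κ*θ² − ζ) )·exp(−ζ(t−s))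 ). -/

import Mathlib

open Set Filter

open Topology


lemma deriv_nonneg_of_max_left {g : ℝ → ℝ} {a b D : ℝ} (hab : a < b)
    (hg : HasDerivWithinAt g D (Set.Ioo a b) b) (hmax : ∀ y ∈ Set.Ioo a b, g y ≤ g b) :
    0 ≤ D := by
  rw [hasDerivWithinAt_iff_tendsto_slope, Set.diff_singleton_eq_self (by simp)] at hg
  haveI : (𝓝[Set.Ioo a b] b).NeBot := by
    apply mem_closure_iff_nhdsWithin_neBot.mp
    rw [closure_Ioo hab.ne]
    exact Set.right_mem_Icc.mpr hab.le
  refine ge_of_tendsto hg ?_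
  filter_upwards [self_mem_nhdsWithin] with y hy
  have h1 : g y - g b ≤ 0 := sub_nonpos.2 (hmax y hy)
  have h2 : y - b ≤ 0 := (sub_neg.2 hy.2).le
  rw [slope_def_field]
  exact div_nonneg_iff.mpr (Or.inr ⟨h1, h2⟩)

lemma deriv_nonpos_of_max_right {g : ℝ → ℝ} {a b D : ℝ} (hab : a < b)
    (hg : HasDerivWithinAt g D (Set.Ioo a b) a) (hmax : ∀ y ∈ Set.Ioo a b, g y ≤ g a) :
    D ≤ 0 := by
  rw [hasDerivWithinAt_iff_tendsto_slope, Set.diff_singleton_eq_self (by simp)] at hg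
  haveI : (𝓝[Set.Ioo a b] a).NeBot := by
    apply mem_closure_iff_nhdsWithin_neBot.mp
    rw [closure_Ioo hab.ne]
    exact Set.left_mem_Icc.mpr hab.le
  refine le_of_tendsto hg ?_
  filter_upwards [self_mem_nhdsWithin] with y hy
  have h1 : g y - g a ≤ 0 := sub_nonpos.2 (hmax y hy)
  have h2 : 0 ≤ y - a := (sub_pos.2 hy.1).le
  rw [slope_def_field]
  exact div_nonpos_iff.mpr (Or.inr ⟨h1, h2⟩)

lemma second_deriv_test {f f1 : ℝ → ℝ} {a c : ℝ} (ha : a ∈ Set.Ioo (0:ℝ) 1)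
    (hf : ∀ x ∈ Set.Icc (0:ℝ) 1, HasDerivWithinAt f (f1 x) (Set.Icc 0 1) x)
    (hf1 : HasDerivWithinAt f1 c (Set.Icc 0 1) a)
    (hmax : ∀ x ∈ Set.Icc (0:ℝ) 1, f x ≤ f a) : f1 a = 0 ∧ c ≤ 0 := by
  have haI : a ∈ Set.Icc (0:ℝ) 1 := ⟨ha.1.le, ha.2.le⟩
  have hnhds : Set.Icc (0:ℝ) 1 ∈ 𝓝 a := Icc_mem_nhds ha.1 ha.2
  have hfa : HasDerivAt f (f1 a) a := (hf a haI).hasDerivAt hnhds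
  have hloc : IsLocalMax f a := by
    filter_upwards [hnhds] with x hx using hmax x hx
  have h0 : f1 a = 0 := hloc.hasDerivAt_eq_zero hfa
  refine ⟨h0, ?_⟩
  by_contra hc
  push_neg at hc
  have hf1a : HasDerivAt f1 c a := hf1.hasDerivAt hnhds
  rw [hasDerivAt_iff_tendsto_slope] at hf1a
  have hev : ∀ᶠ y in 𝓝[>] a, 0 < slope f1 a y :=
    (hf1a.mono_left (nhdsWithin_mono _ (fun y hy => Set.mem_compl_singleton_iff.mpr (ne_of_gt hy)))).eventually
      (eventually_gt_nhds hc)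
  rw [eventually_iff, mem_nhdsGT_iff_exists_Ioo_subset] at hev
  obtain ⟨b', hb', hsub⟩ := hev
  obtain ⟨b, hab, hbm⟩ := exists_between (lt_min hb' ha.2)
  have hb1 : b < 1 := lt_of_lt_of_le hbm (min_le_right _ _)
  have hbb' : b < b' := lt_of_lt_of_le hbm (min_le_left _ _)
  have hpos : ∀ x ∈ Set.Ioo a b, 0 < f1 x := by
    intro x hx
    have hs : 0 < slope f1 a x := hsub ⟨hx.1, hx.2.trans hbb'⟩
    rw [slope_def_field, h0, sub_zero] at hs
    have hxa : 0 < x - a := sub_pos.2 hx.1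
    have := mul_pos hs hxa
    rwa [div_mul_cancel₀ _ (ne_of_gt hxa)] at this
  have hsubset : Set.Icc a b ⊆ Set.Icc (0:ℝ) 1 :=
    Set.Icc_subset_Icc ha.1.le hb1.le
  have hcont : ContinuousOn f (Set.Icc a b) := fun x hx =>
    ((hf x (hsubset hx)).continuousWithinAt).mono hsubset
  have hmono : StrictMonoOn f (Set.Icc a b) := by
    apply strictMonoOn_of_deriv_pos (convex_Icc a b) hcont
    intro x hx
    rw [interior_Icc] at hx
    have hxI : x ∈ Set.Ioo (0:ℝ) 1 := ⟨ha.1.trans hx.1, hx.2.trans hb1⟩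
    have hder : HasDerivAt f (f1 x) x :=
      (hf x ⟨hxI.1.le, hxI.2.le⟩).hasDerivAt (Icc_mem_nhds hxI.1 hxI.2)
    rw [hder.deriv]
    exact hpos x hx
  have := hmono (Set.left_mem_Icc.2 hab.le) (Set.right_mem_Icc.2 hab.le) hab
  exact absurd (hmax b ⟨ha.1.le.trans hab.le, hb1.le⟩) (not_le.2 this)

set_option maxHeartbeats 2000000 in
lemma oneSided
    (T t₀ κstar ζ θ lam₀ lam₁ : ℝ)
    (ht₀ : t₀ ∈ Set.Ioc (0:ℝ) T)
    (hθ : θ ∈ Set.Ioo 0 (Real.pi / 2))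
    (hζ : ζ ∈ Set.Ico (0:ℝ) (κstar * θ ^ 2))
    (hlam₀ : 0 < lam₀)
    (hc₁ : 0 < lam₁ * Real.cos θ - θ * Real.sin θ)
    (d₀ d₁ : ℝ → ℝ) (f u ut ux uxx : ℝ → ℝ → ℝ)
    (hu_cont : ContinuousOn (fun p : ℝ × ℝ => u p.1 p.2) (Set.Icc 0 T ×ˢ Set.Icc 0 1))
    (hut : ∀ t ∈ Set.Ioc (0:ℝ) T, ∀ x ∈ Set.Icc (0:ℝ) 1,
      HasDerivWithinAt (fun τ => u τ x) (ut t x) (Set.Ioc 0 T) t)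
    (hux : ∀ t ∈ Set.Ioc (0:ℝ) T, ∀ x ∈ Set.Icc (0:ℝ) 1,
      HasDerivWithinAt (u t) (ux t x) (Set.Icc 0 1) x)
    (huxx : ∀ t ∈ Set.Ioc (0:ℝ) T, ∀ x ∈ Set.Icc (0:ℝ) 1,
      HasDerivWithinAt (ux t) (uxx t x) (Set.Icc 0 1) x)
    (hpde' : ∀ t ∈ Set.Ioc (0:ℝ) T, ∀ x ∈ Set.Icc (0:ℝ) 1,
      0 < u t x → uxx t x ≤ -(θ ^ 2) * u t x →
      ut t x ≤ -(κstar * θ ^ 2) * u t x + |f t x|)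
    (hbc0 : ∀ t ∈ Set.Ioc (0:ℝ) T, 0 < u t 0 → lam₀ * u t 0 ≤ ux t 0 + |d₀ t|)
    (hbc1 : ∀ t ∈ Set.Ioc (0:ℝ) T, 0 < u t 1 → ux t 1 ≤ -(lam₁ * u t 1) + |d₁ t|)
    (W0 : ℝ) (hW0nn : 0 ≤ W0)
    (hW0 : ∀ x ∈ Set.Icc (0:ℝ) 1, u 0 x ≤ W0 * Real.cos (θ * x))
    (M : ℝ → ℝ)
    (hM0 : ∀ s ∈ Set.Ioc (0:ℝ) t₀, |d₀ s| / lam₀ ≤ M s)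
    (hM1 : ∀ s ∈ Set.Ioc (0:ℝ) t₀, |d₁ s| / (lam₁ * Real.cos θ - θ * Real.sin θ) ≤ M s)
    (hMf : ∀ s ∈ Set.Ioc (0:ℝ) t₀, ∀ x ∈ Set.Ioo (0:ℝ) 1,
      |f s x| ≤ (κstar * θ ^ 2 - ζ) * M s * Real.cos (θ * x))
    (K : ℝ)
    (hKW : Real.exp (-ζ * t₀) * W0 ≤ K)
    (hKM : ∀ s ∈ Set.Ioc (0:ℝ) t₀, M s * Real.exp (-ζ * (t₀ - s)) ≤ K) :
    ∀ x ∈ Set.Icc (0:ℝ) 1, u t₀ x ≤ K * Real.cos (θ * x) := by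
  by_contra hcon
  push_neg at hcon
  obtain ⟨xh, hxhm, hxh⟩ := hcon
  have hθ0 : 0 < θ := hθ.1
  have hcosθ : 0 < Real.cos θ := by
    apply Real.cos_pos_of_mem_Ioo
    constructor
    · nlinarith [Real.pi_pos]
    · exact hθ.2
  have hηpos : ∀ x ∈ Set.Icc (0:ℝ) 1, 0 < Real.cos (θ * x) := by
    intro x hx
    apply Real.cos_pos_of_mem_Ioo
    constructor
    · nlinarith [Real.pi_pos, mul_nonneg hθ0.le hx.1]
    · nlinarith [hθ.2, mul_le_mul_of_nonneg_left hx.2 hθ0.le]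
  -- the rectangle and the maximum of V
  have hsubR : Set.Icc (0:ℝ) t₀ ×ˢ Set.Icc (0:ℝ) 1 ⊆ Set.Icc 0 T ×ˢ Set.Icc 0 1 :=
    Set.prod_mono (Set.Icc_subset_Icc le_rfl ht₀.2) subset_rfl
  have hVcont : ContinuousOn (fun p : ℝ × ℝ => u p.1 p.2 * Real.exp (ζ * p.1) / Real.cos (θ * p.2))
      (Set.Icc (0:ℝ) t₀ ×ˢ Set.Icc (0:ℝ) 1) := by
    apply ContinuousOn.div
    · exact (hu_cont.mono hsubR).mul (Continuous.continuousOn (by fun_prop))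
    · exact Continuous.continuousOn (by fun_prop)
    · intro p hp
      exact ne_of_gt (hηpos p.2 hp.2)
  obtain ⟨⟨s', x'⟩, hmem, hmax⟩ :=
    (isCompact_Icc.prod isCompact_Icc).exists_isMaxOn
      ⟨(0, 0), ⟨⟨le_rfl, ht₀.1.le⟩, ⟨le_rfl, zero_le_one⟩⟩⟩ hVcont
  rw [isMaxOn_iff] at hmax
  have hs'mem : s' ∈ Set.Icc (0:ℝ) t₀ := hmem.1
  have hx'mem : x' ∈ Set.Icc (0:ℝ) 1 := hmem.2
  have hK0 : 0 ≤ K := le_trans (mul_nonneg (Real.exp_nonneg _) hW0nn) hKW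
  have hQ0 : 0 ≤ K * Real.exp (ζ * t₀) := mul_nonneg hK0 (Real.exp_pos _).le
  have hgt : K * Real.exp (ζ * t₀) < u s' x' * Real.exp (ζ * s') / Real.cos (θ * x') := by
    have hηxh := hηpos xh hxhm
    have h1 : K * Real.exp (ζ * t₀) < u t₀ xh * Real.exp (ζ * t₀) / Real.cos (θ * xh) := by
      rw [lt_div_iff₀ hηxh]
      nlinarith [mul_lt_mul_of_pos_right hxh (Real.exp_pos (ζ * t₀))]
    have h2 := hmax (t₀, xh) ⟨⟨ht₀.1.le, le_rfl⟩, hxhm⟩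
    exact lt_of_lt_of_le h1 h2
  have hVpos : 0 < u s' x' * Real.exp (ζ * s') / Real.cos (θ * x') := lt_of_le_of_lt hQ0 hgt
  have hus' : 0 < u s' x' := by
    by_contra h
    push_neg at h
    have : u s' x' * Real.exp (ζ * s') / Real.cos (θ * x') ≤ 0 :=
      div_nonpos_iff.mpr (Or.inr ⟨mul_nonpos_iff.mpr (Or.inr ⟨h, (Real.exp_pos _).le⟩),
        (hηpos x' hx'mem).le⟩)
    linarith
  have hMQ : s' ∈ Set.Ioc (0:ℝ) t₀ → M s' * Real.exp (ζ * s') ≤ K * Real.exp (ζ * t₀) := by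
    intro hs
    have hexp : Real.exp (-ζ * (t₀ - s')) * Real.exp (ζ * t₀) = Real.exp (ζ * s') := by
      rw [← Real.exp_add]; congr 1; ring
    calc M s' * Real.exp (ζ * s')
        = M s' * Real.exp (-ζ * (t₀ - s')) * Real.exp (ζ * t₀) := by rw [mul_assoc, hexp]
      _ ≤ K * Real.exp (ζ * t₀) :=
        mul_le_mul_of_nonneg_right (hKM s' hs) (Real.exp_pos _).le
  rcases eq_or_lt_of_le hs'mem.1 with h0 | h0
  · -- s' = 0 : initial-time case
    have hW0Q : W0 ≤ K * Real.exp (ζ * t₀) := by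
      have hexp : Real.exp (-ζ * t₀) * Real.exp (ζ * t₀) = 1 := by
        rw [← Real.exp_add, show -ζ * t₀ + ζ * t₀ = 0 by ring, Real.exp_zero]
      calc W0 = Real.exp (-ζ * t₀) * W0 * Real.exp (ζ * t₀) := by
            rw [mul_comm (Real.exp (-ζ * t₀)) W0, mul_assoc, hexp, mul_one]
        _ ≤ K * Real.exp (ζ * t₀) := mul_le_mul_of_nonneg_right hKW (Real.exp_pos _).le
    have hm : u s' x' * Real.exp (ζ * s') / Real.cos (θ * x') ≤ W0 := by
      rw [← h0, mul_zero, Real.exp_zero, mul_one, div_le_iff₀ (hηpos x' hx'mem)]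
      exact hW0 x' hx'mem
    linarith
  · -- 0 < s'
    have hs'T : s' ∈ Set.Ioc (0:ℝ) T := ⟨h0, hs'mem.2.trans ht₀.2⟩
    have hs't : s' ∈ Set.Ioc (0:ℝ) t₀ := ⟨h0, hs'mem.2⟩
    have hEpos : 0 < Real.exp (ζ * s') := Real.exp_pos _
    -- time derivative sign
    have hexp' : HasDerivAt (fun s : ℝ => Real.exp (ζ * s)) (Real.exp (ζ * s') * ζ) s' := by
      have h : HasDerivAt (fun s : ℝ => ζ * s) ζ s' := by
        simpa using (hasDerivAt_id s').const_mul ζ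
      exact h.exp
    have htd : HasDerivWithinAt (fun s => u s x' * Real.exp (ζ * s) / Real.cos (θ * x'))
        ((ut s' x' * Real.exp (ζ * s') + u s' x' * (Real.exp (ζ * s') * ζ)) / Real.cos (θ * x'))
        (Set.Ioc 0 T) s' :=
      ((hut s' hs'T x' hx'mem).mul hexp'.hasDerivWithinAt).div_const _
    have hD : 0 ≤ (ut s' x' * Real.exp (ζ * s') + u s' x' * (Real.exp (ζ * s') * ζ)) /
        Real.cos (θ * x') := by
      apply deriv_nonneg_of_max_left h0
        (htd.mono (fun y hy => ⟨hy.1, hy.2.le.trans hs'T.2⟩))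
      intro y hy
      exact hmax (y, x') ⟨⟨hy.1.le, hy.2.le.trans hs'mem.2⟩, hx'mem⟩
    have hD1 : 0 ≤ ut s' x' * Real.exp (ζ * s') + u s' x' * (Real.exp (ζ * s') * ζ) := by
      rcases div_nonneg_iff.mp hD with ⟨h1, _⟩ | ⟨_, h2⟩
      · exact h1
      · exact absurd h2 (not_le.2 (hηpos x' hx'mem))
    have hUT : 0 ≤ ut s' x' + ζ * u s' x' := by
      have h2 : Real.exp (ζ * s') * 0 ≤ Real.exp (ζ * s') * (ut s' x' + ζ * u s' x') := by
        nlinarith [hD1]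
      exact le_of_mul_le_mul_left h2 hEpos
    -- spatial derivative machinery
    have hlin : ∀ x : ℝ, HasDerivAt (fun y : ℝ => θ * y) θ x := by
      intro x; simpa using (hasDerivAt_id x).const_mul θ
    have hηd : ∀ x : ℝ, HasDerivAt (fun y => Real.cos (θ * y)) (-Real.sin (θ * x) * θ) x :=
      fun x => (hlin x).cos
    have hη1d : ∀ x : ℝ,
        HasDerivAt (fun y => -Real.sin (θ * y) * θ) (-(θ ^ 2) * Real.cos (θ * x)) x := by
      intro x
      have h2 : HasDerivAt (fun y => -Real.sin (θ * y) * θ) (-(Real.cos (θ * x) * θ) * θ) x :=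
        (((hlin x).sin).fun_neg).mul_const θ
      convert h2 using 1
      ring
    have hhd : ∀ x ∈ Set.Icc (0:ℝ) 1,
        HasDerivWithinAt (fun y => u s' y * Real.exp (ζ * s') / Real.cos (θ * y))
          ((ux s' x * Real.exp (ζ * s') * Real.cos (θ * x) -
            u s' x * Real.exp (ζ * s') * (-Real.sin (θ * x) * θ)) / Real.cos (θ * x) ^ 2)
          (Set.Icc 0 1) x := by
      intro x hx
      exact ((hux s' hs'T x hx).mul_const _).div ((hηd x).hasDerivWithinAt)
        (ne_of_gt (hηpos x hx))
    rcases eq_or_lt_of_le hx'mem.1 with hx0 | hx0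
    · -- x' = 0 : left boundary
      subst hx0
      have hd0 : (ux s' 0 * Real.exp (ζ * s') * Real.cos (θ * 0) -
          u s' 0 * Real.exp (ζ * s') * (-Real.sin (θ * 0) * θ)) / Real.cos (θ * 0) ^ 2 ≤ 0 := by
        apply deriv_nonpos_of_max_right one_pos
          ((hhd 0 ⟨le_rfl, zero_le_one⟩).mono Set.Ioo_subset_Icc_self)
        intro y hy
        exact hmax (s', y) ⟨hs'mem, ⟨hy.1.le, hy.2.le⟩⟩
      have hd0' : ux s' 0 * Real.exp (ζ * s') ≤ 0 := by
        have he : (ux s' 0 * Real.exp (ζ * s') * Real.cos (θ * 0) -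
            u s' 0 * Real.exp (ζ * s') * (-Real.sin (θ * 0) * θ)) / Real.cos (θ * 0) ^ 2
            = ux s' 0 * Real.exp (ζ * s') := by
          norm_num
        rwa [he] at hd0
      have hux0 : ux s' 0 ≤ 0 := by
        by_contra h
        push_neg at h
        nlinarith
      have hb := hbc0 s' hs'T hus'
      have hu0le : u s' 0 ≤ |d₀ s'| / lam₀ := by
        rw [le_div_iff₀ hlam₀]
        nlinarith
      have hfin : u s' 0 * Real.exp (ζ * s') / Real.cos (θ * 0) ≤ M s' * Real.exp (ζ * s') := by
        rw [mul_zero, Real.cos_zero, div_one]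
        calc u s' 0 * Real.exp (ζ * s') ≤ (|d₀ s'| / lam₀) * Real.exp (ζ * s') :=
              mul_le_mul_of_nonneg_right hu0le hEpos.le
          _ ≤ M s' * Real.exp (ζ * s') :=
              mul_le_mul_of_nonneg_right (hM0 s' hs't) hEpos.le
      linarith [hMQ hs't]
    rcases eq_or_lt_of_le hx'mem.2 with hx1 | hx1
    · -- x' = 1 : right boundary
      subst hx1
      have hd1 : 0 ≤ (ux s' 1 * Real.exp (ζ * s') * Real.cos (θ * 1) -
          u s' 1 * Real.exp (ζ * s') * (-Real.sin (θ * 1) * θ)) / Real.cos (θ * 1) ^ 2 := by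
        apply deriv_nonneg_of_max_left one_pos
          ((hhd 1 ⟨zero_le_one, le_rfl⟩).mono Set.Ioo_subset_Icc_self)
        intro y hy
        exact hmax (s', y) ⟨hs'mem, ⟨hy.1.le, hy.2.le⟩⟩
      have hnum : 0 ≤ ux s' 1 * Real.exp (ζ * s') * Real.cos θ +
          u s' 1 * Real.exp (ζ * s') * (Real.sin θ * θ) := by
        rw [mul_one] at hd1
        rcases div_nonneg_iff.mp hd1 with ⟨h1, _⟩ | ⟨_, h2⟩
        · nlinarith [h1]
        · nlinarith [pow_pos hcosθ 2]
      have hgeo : 0 ≤ ux s' 1 * Real.cos θ + u s' 1 * (θ * Real.sin θ) := by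
        have h2 : Real.exp (ζ * s') * 0 ≤
            Real.exp (ζ * s') * (ux s' 1 * Real.cos θ + u s' 1 * (θ * Real.sin θ)) := by
          nlinarith [hnum]
        exact le_of_mul_le_mul_left h2 hEpos
      have hb := hbc1 s' hs'T hus'
      have h2 : u s' 1 * (lam₁ * Real.cos θ - θ * Real.sin θ) ≤ |d₁ s'| * Real.cos θ := by
        nlinarith [mul_le_mul_of_nonneg_right hb hcosθ.le]
      have h4 : |d₁ s'| ≤ M s' * (lam₁ * Real.cos θ - θ * Real.sin θ) := by
        have h9 := hM1 s' hs't
        rw [div_le_iff₀ hc₁] at h9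
        exact h9
      have hule : u s' 1 ≤ M s' * Real.cos θ := by
        have h7 : u s' 1 * (lam₁ * Real.cos θ - θ * Real.sin θ) ≤
            (M s' * Real.cos θ) * (lam₁ * Real.cos θ - θ * Real.sin θ) := by
          calc u s' 1 * (lam₁ * Real.cos θ - θ * Real.sin θ)
              ≤ |d₁ s'| * Real.cos θ := h2
            _ ≤ M s' * (lam₁ * Real.cos θ - θ * Real.sin θ) * Real.cos θ :=
                mul_le_mul_of_nonneg_right h4 hcosθ.le
            _ = (M s' * Real.cos θ) * (lam₁ * Real.cos θ - θ * Real.sin θ) := by ring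
        exact le_of_mul_le_mul_right h7 hc₁
      have hfin : u s' 1 * Real.exp (ζ * s') / Real.cos (θ * 1) ≤ M s' * Real.exp (ζ * s') := by
        rw [mul_one, div_le_iff₀ hcosθ]
        calc u s' 1 * Real.exp (ζ * s')
            ≤ (M s' * Real.cos θ) * Real.exp (ζ * s') :=
              mul_le_mul_of_nonneg_right hule hEpos.le
          _ = M s' * Real.exp (ζ * s') * Real.cos θ := by ring
      linarith [hMQ hs't]
    · -- interior point
      have hx'in : x' ∈ Set.Ioo (0:ℝ) 1 := ⟨hx0, hx1⟩
      have hd2 : 0 < κstar * θ ^ 2 - ζ := sub_pos.2 hζ.2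
      have hcq : 0 < Real.cos (θ * x') := hηpos x' hx'mem
      have hNd : HasDerivWithinAt
          (fun x => ux s' x * Real.exp (ζ * s') * Real.cos (θ * x) -
            u s' x * Real.exp (ζ * s') * (-Real.sin (θ * x) * θ))
          ((uxx s' x' * Real.exp (ζ * s') * Real.cos (θ * x') +
            ux s' x' * Real.exp (ζ * s') * (-Real.sin (θ * x') * θ)) -
           (ux s' x' * Real.exp (ζ * s') * (-Real.sin (θ * x') * θ) +
            u s' x' * Real.exp (ζ * s') * (-(θ ^ 2) * Real.cos (θ * x'))))
          (Set.Icc 0 1) x' :=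
        ((((huxx s' hs'T x' hx'mem).mul_const _).mul (hηd x').hasDerivWithinAt).sub
          (((hux s' hs'T x' hx'mem).mul_const _).mul (hη1d x').hasDerivWithinAt))
      have hDend : HasDerivWithinAt (fun x => Real.cos (θ * x) ^ 2)
          (2 * Real.cos (θ * x') ^ 1 * (-Real.sin (θ * x') * θ)) (Set.Icc 0 1) x' := by
        have h2 := ((hηd x').hasDerivWithinAt (s := Set.Icc (0:ℝ) 1)).fun_pow 2
        simpa using h2
      have hh1d := hNd.div hDend (ne_of_gt (pow_pos hcq 2))
      obtain ⟨hz, hC⟩ := second_deriv_test hx'in hhd hh1d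
        (fun x hx => hmax (s', x) ⟨hs'mem, hx⟩)
      have hNz : ux s' x' * Real.exp (ζ * s') * Real.cos (θ * x') -
          u s' x' * Real.exp (ζ * s') * (-Real.sin (θ * x') * θ) = 0 := by
        rcases div_eq_zero_iff.mp hz with h | h
        · exact h
        · exact absurd h (ne_of_gt (pow_pos hcq 2))
      have huxxle : uxx s' x' ≤ -(θ ^ 2) * u s' x' := by
        have hden : (0:ℝ) < (Real.cos (θ * x') ^ 2) ^ 2 := pow_pos (pow_pos hcq 2) 2
        have hnum : ((uxx s' x' * Real.exp (ζ * s') * Real.cos (θ * x') +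
            ux s' x' * Real.exp (ζ * s') * (-Real.sin (θ * x') * θ)) -
           (ux s' x' * Real.exp (ζ * s') * (-Real.sin (θ * x') * θ) +
            u s' x' * Real.exp (ζ * s') * (-(θ ^ 2) * Real.cos (θ * x')))) *
            Real.cos (θ * x') ^ 2 -
            (ux s' x' * Real.exp (ζ * s') * Real.cos (θ * x') -
             u s' x' * Real.exp (ζ * s') * (-Real.sin (θ * x') * θ)) *
            (2 * Real.cos (θ * x') ^ 1 * (-Real.sin (θ * x') * θ)) ≤ 0 := by
          rcases div_nonpos_iff.mp hC with ⟨_, h2⟩ | ⟨h1, _⟩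
          · exact absurd h2 (not_le.2 hden)
          · exact h1
        rw [hNz, zero_mul, sub_zero] at hnum
        have he : ((uxx s' x' * Real.exp (ζ * s') * Real.cos (θ * x') +
            ux s' x' * Real.exp (ζ * s') * (-Real.sin (θ * x') * θ)) -
           (ux s' x' * Real.exp (ζ * s') * (-Real.sin (θ * x') * θ) +
            u s' x' * Real.exp (ζ * s') * (-(θ ^ 2) * Real.cos (θ * x')))) *
            Real.cos (θ * x') ^ 2 =
            (uxx s' x' + θ ^ 2 * u s' x') * (Real.exp (ζ * s') * Real.cos (θ * x') ^ 3) := by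
          ring
        rw [he] at hnum
        have hpos3 : 0 < Real.exp (ζ * s') * Real.cos (θ * x') ^ 3 := by positivity
        have h5 : uxx s' x' + θ ^ 2 * u s' x' ≤ 0 := by
          have := le_of_mul_le_mul_right
            (by rw [zero_mul]; exact hnum : (uxx s' x' + θ ^ 2 * u s' x') *
              (Real.exp (ζ * s') * Real.cos (θ * x') ^ 3) ≤
              0 * (Real.exp (ζ * s') * Real.cos (θ * x') ^ 3)) hpos3
          exact this
        linarith
      have hpd := hpde' s' hs'T x' hx'mem hus' huxxle
      have hfb := hMf s' hs't x' hx'in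
      have h5 : (κstar * θ ^ 2 - ζ) * u s' x' ≤ |f s' x'| := by nlinarith [hUT, hpd]
      have h6 : (κstar * θ ^ 2 - ζ) * u s' x' ≤
          (κstar * θ ^ 2 - ζ) * (M s' * Real.cos (θ * x')) := by nlinarith [hfb]
      have hkey : u s' x' ≤ M s' * Real.cos (θ * x') := le_of_mul_le_mul_left h6 hd2
      have hfin : u s' x' * Real.exp (ζ * s') / Real.cos (θ * x') ≤ M s' * Real.exp (ζ * s') := by
        rw [div_le_iff₀ hcq]
        nlinarith [mul_le_mul_of_nonneg_right hkey hEpos.le]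
      linarith [hMQ hs't]

set_option maxHeartbeats 1000000 in
/-- **Example 3.2** (Karafyllis–Krstic): heat equation with non-local diffusion
coefficient `κ(u[t]) ≥ κ* > 0` and nonlinear, non-local Robin-type boundary conditions.
With `θ ∈ (0,π/2)` satisfying `θ·tan(θ) < λ₁` and weight `η(x) = cos(θx)`, every
classical solution satisfies a fading memory ISS estimate in the weighted sup norm. -/
theorem example3_2
    (T : ℝ) (hT : 0 < T)
    (κstar : ℝ) (hκstar : 0 < κstar)
    (κ : (ℝ → ℝ) → ℝ) (hκ : ∀ v : ℝ → ℝ, κstar ≤ κ v)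
    (β₀ β₁ : (ℝ → ℝ) → ℝ) (hβ₀ : ∀ v : ℝ → ℝ, 0 ≤ β₀ v) (hβ₁ : ∀ v : ℝ → ℝ, 0 ≤ β₁ v)
    (lam₀ lam₁ : ℝ) (hlam₀ : 0 < lam₀) (hlam₁ : 0 < lam₁)
    (θ : ℝ) (hθ : θ ∈ Set.Ioo 0 (Real.pi / 2)) (hθlam : θ * Real.tan θ < lam₁)
    (d₀ d₁ : ℝ → ℝ) (hd₀ : ContinuousOn d₀ (Set.Icc 0 T)) (hd₁ : ContinuousOn d₁ (Set.Icc 0 T))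
    (f : ℝ → ℝ → ℝ)
    (hf_cont : ContinuousOn (fun p : ℝ × ℝ => f p.1 p.2) (Set.Icc 0 T ×ˢ Set.Icc 0 1))
    (u ut ux uxx : ℝ → ℝ → ℝ)
    (hu_cont : ContinuousOn (fun p : ℝ × ℝ => u p.1 p.2) (Set.Icc 0 T ×ˢ Set.Icc 0 1))
    (hut : ∀ t ∈ Set.Ioc (0:ℝ) T, ∀ x ∈ Set.Icc (0:ℝ) 1,
      HasDerivWithinAt (fun τ => u τ x) (ut t x) (Set.Ioc 0 T) t)
    (hut_cont : ContinuousOn (fun p : ℝ × ℝ => ut p.1 p.2) (Set.Ioc 0 T ×ˢ Set.Icc 0 1))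
    (hux : ∀ t ∈ Set.Ioc (0:ℝ) T, ∀ x ∈ Set.Icc (0:ℝ) 1,
      HasDerivWithinAt (u t) (ux t x) (Set.Icc 0 1) x)
    (huxx : ∀ t ∈ Set.Ioc (0:ℝ) T, ∀ x ∈ Set.Icc (0:ℝ) 1,
      HasDerivWithinAt (ux t) (uxx t x) (Set.Icc 0 1) x)
    (huxx_cont : ∀ t ∈ Set.Ioc (0:ℝ) T, ContinuousOn (uxx t) (Set.Icc 0 1))
    (hpde : ∀ t ∈ Set.Ioc (0:ℝ) T, ∀ x ∈ Set.Icc (0:ℝ) 1,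
      ut t x = κ (u t) * uxx t x + f t x)
    (hbc : ∀ t ∈ Set.Ioc (0:ℝ) T,
      ux t 0 = (lam₀ + β₀ (u t)) * u t 0 + d₀ t ∧
      ux t 1 = -(lam₁ + β₁ (u t)) * u t 1 + d₁ t) :
    ∀ ζ ∈ Set.Ico (0:ℝ) (κstar * θ ^ 2), ∀ t ∈ Set.Ioc (0:ℝ) T,
      sSup ((fun x => |u t x| / Real.cos (θ * x)) '' Set.Icc 0 1) ≤
        max (Real.exp (-ζ * t) *
              sSup ((fun x => |u 0 x| / Real.cos (θ * x)) '' Set.Icc 0 1))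
          (sSup ((fun s =>
              max (max (|d₀ s| / lam₀)
                  (|d₁ s| / (lam₁ * Real.cos θ - θ * Real.sin θ)))
                (sSup ((fun x => |f s x| / Real.cos (θ * x)) '' Set.Ioo 0 1) /
                  (κstar * θ ^ 2 - ζ)) *
              Real.exp (-ζ * (t - s))) '' Set.Ioc 0 t)) := by
  intro ζ hζ t ht
  have hθ0 : 0 < θ := hθ.1
  have hcosθ : 0 < Real.cos θ := by
    apply Real.cos_pos_of_mem_Ioo
    exact ⟨by nlinarith [Real.pi_pos], hθ.2⟩
  have hc₁ : 0 < lam₁ * Real.cos θ - θ * Real.sin θ := by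
    have h3 := mul_lt_mul_of_pos_right hθlam hcosθ
    rw [Real.tan_eq_sin_div_cos] at h3
    have h4 : θ * (Real.sin θ / Real.cos θ) * Real.cos θ = θ * Real.sin θ := by
      field_simp
    rw [h4] at h3
    linarith
  have hηpos : ∀ x ∈ Set.Icc (0:ℝ) 1, 0 < Real.cos (θ * x) := by
    intro x hx
    apply Real.cos_pos_of_mem_Ioo
    constructor
    · nlinarith [Real.pi_pos, mul_nonneg hθ0.le hx.1]
    · nlinarith [hθ.2, mul_le_mul_of_nonneg_left hx.2 hθ0.le]
  have hηge : ∀ x ∈ Set.Icc (0:ℝ) 1, Real.cos θ ≤ Real.cos (θ * x) := by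
    intro x hx
    apply Real.cos_le_cos_of_nonneg_of_le_pi (mul_nonneg hθ0.le hx.1)
    · nlinarith [Real.pi_pos, hθ.2]
    · nlinarith [mul_le_mul_of_nonneg_left hx.2 hθ0.le]
  have hd2 : 0 < κstar * θ ^ 2 - ζ := sub_pos.2 hζ.2
  -- global bounds
  obtain ⟨Cu, hCu⟩ := (isCompact_Icc.prod isCompact_Icc).exists_bound_of_continuousOn hu_cont
  obtain ⟨Cf, hCf⟩ := (isCompact_Icc.prod isCompact_Icc).exists_bound_of_continuousOn hf_cont
  obtain ⟨C₀, hC₀⟩ := isCompact_Icc.exists_bound_of_continuousOn hd₀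
  obtain ⟨C₁, hC₁⟩ := isCompact_Icc.exists_bound_of_continuousOn hd₁
  simp only [Real.norm_eq_abs] at hCu hCf hC₀ hC₁
  have hCu0 : 0 ≤ Cu :=
    le_trans (abs_nonneg _) (hCu (0,0) ⟨⟨le_rfl, hT.le⟩, ⟨le_rfl, zero_le_one⟩⟩)
  have hCf0 : 0 ≤ Cf :=
    le_trans (abs_nonneg _) (hCf (0,0) ⟨⟨le_rfl, hT.le⟩, ⟨le_rfl, zero_le_one⟩⟩)
  -- initial data sup
  set W0 := sSup ((fun x => |u 0 x| / Real.cos (θ * x)) '' Set.Icc 0 1) with hW0def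
  have hW0bdd : BddAbove ((fun x => |u 0 x| / Real.cos (θ * x)) '' Set.Icc 0 1) := by
    refine ⟨Cu / Real.cos θ, ?_⟩
    rintro y ⟨x, hx, rfl⟩
    exact div_le_div₀ hCu0 (hCu (0, x) ⟨⟨le_rfl, hT.le⟩, hx⟩) hcosθ (hηge x hx)
  have hW0nn : 0 ≤ W0 := by
    refine le_trans (div_nonneg (abs_nonneg _) (hηpos 0 ⟨le_rfl, zero_le_one⟩).le)
      (le_csSup hW0bdd ⟨0, ⟨le_rfl, zero_le_one⟩, rfl⟩)
  have hW0u : ∀ x ∈ Set.Icc (0:ℝ) 1, |u 0 x| ≤ W0 * Real.cos (θ * x) := by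
    intro x hx
    have h1 : |u 0 x| / Real.cos (θ * x) ≤ W0 := le_csSup hW0bdd ⟨x, hx, rfl⟩
    rwa [div_le_iff₀ (hηpos x hx)] at h1
  -- the fading-memory sup
  set S := sSup ((fun s =>
      max (max (|d₀ s| / lam₀)
          (|d₁ s| / (lam₁ * Real.cos θ - θ * Real.sin θ)))
        (sSup ((fun x => |f s x| / Real.cos (θ * x)) '' Set.Ioo 0 1) /
          (κstar * θ ^ 2 - ζ)) *
      Real.exp (-ζ * (t - s))) '' Set.Ioc 0 t) with hSdef
  -- slice sup bounds for f
  have hfbdd : ∀ s ∈ Set.Icc (0:ℝ) T,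
      BddAbove ((fun x => |f s x| / Real.cos (θ * x)) '' Set.Ioo 0 1) := by
    intro s hs
    refine ⟨Cf / Real.cos θ, ?_⟩
    rintro y ⟨x, hx, rfl⟩
    exact div_le_div₀ hCf0 (hCf (s, x) ⟨hs, ⟨hx.1.le, hx.2.le⟩⟩) hcosθ
      (hηge x ⟨hx.1.le, hx.2.le⟩)
  have hfsup : ∀ s ∈ Set.Icc (0:ℝ) T,
      sSup ((fun x => |f s x| / Real.cos (θ * x)) '' Set.Ioo 0 1) ≤ Cf / Real.cos θ := by
    intro s hs
    refine csSup_le ⟨_, ⟨(1:ℝ)/2, ⟨by norm_num, by norm_num⟩, rfl⟩⟩ ?_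
    rintro y ⟨x, hx, rfl⟩
    exact div_le_div₀ hCf0 (hCf (s, x) ⟨hs, ⟨hx.1.le, hx.2.le⟩⟩) hcosθ
      (hηge x ⟨hx.1.le, hx.2.le⟩)
  have hSbdd : BddAbove ((fun s =>
      max (max (|d₀ s| / lam₀)
          (|d₁ s| / (lam₁ * Real.cos θ - θ * Real.sin θ)))
        (sSup ((fun x => |f s x| / Real.cos (θ * x)) '' Set.Ioo 0 1) /
          (κstar * θ ^ 2 - ζ)) *
      Real.exp (-ζ * (t - s))) '' Set.Ioc 0 t) := by
    refine ⟨max (max (C₀ / lam₀) (C₁ / (lam₁ * Real.cos θ - θ * Real.sin θ)))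
      ((Cf / Real.cos θ) / (κstar * θ ^ 2 - ζ)), ?_⟩
    rintro y ⟨s, hs, rfl⟩
    have hsT : s ∈ Set.Icc (0:ℝ) T := ⟨hs.1.le, hs.2.trans ht.2⟩
    have hMle : max (max (|d₀ s| / lam₀)
          (|d₁ s| / (lam₁ * Real.cos θ - θ * Real.sin θ)))
        (sSup ((fun x => |f s x| / Real.cos (θ * x)) '' Set.Ioo 0 1) /
          (κstar * θ ^ 2 - ζ)) ≤
        max (max (C₀ / lam₀) (C₁ / (lam₁ * Real.cos θ - θ * Real.sin θ)))
          ((Cf / Real.cos θ) / (κstar * θ ^ 2 - ζ)) := by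
      apply max_le_max
      · apply max_le_max
        · exact (div_le_div_iff_of_pos_right hlam₀).mpr (hC₀ s hsT)
        · exact (div_le_div_iff_of_pos_right hc₁).mpr (hC₁ s hsT)
      · exact (div_le_div_iff_of_pos_right hd2).mpr (hfsup s hsT)
    have hMnn : 0 ≤ max (max (|d₀ s| / lam₀)
          (|d₁ s| / (lam₁ * Real.cos θ - θ * Real.sin θ)))
        (sSup ((fun x => |f s x| / Real.cos (θ * x)) '' Set.Ioo 0 1) /
          (κstar * θ ^ 2 - ζ)) :=
      le_trans (div_nonneg (abs_nonneg _) hlam₀.le)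
        ((le_max_left _ _).trans (le_max_left _ _))
    have hexp1 : Real.exp (-ζ * (t - s)) ≤ 1 := by
      rw [Real.exp_le_one_iff]
      nlinarith [hζ.1, hs.2]
    calc _ * Real.exp (-ζ * (t - s)) ≤ _ * 1 := mul_le_mul_of_nonneg_left hexp1 hMnn
      _ = _ := mul_one _
      _ ≤ _ := hMle
  -- per-time bounds feeding oneSided
  have hM0' : ∀ s ∈ Set.Ioc (0:ℝ) t, |d₀ s| / lam₀ ≤
      max (max (|d₀ s| / lam₀) (|d₁ s| / (lam₁ * Real.cos θ - θ * Real.sin θ)))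
        (sSup ((fun x => |f s x| / Real.cos (θ * x)) '' Set.Ioo 0 1) /
          (κstar * θ ^ 2 - ζ)) :=
    fun s _ => (le_max_left _ _).trans (le_max_left _ _)
  have hM1' : ∀ s ∈ Set.Ioc (0:ℝ) t, |d₁ s| / (lam₁ * Real.cos θ - θ * Real.sin θ) ≤
      max (max (|d₀ s| / lam₀) (|d₁ s| / (lam₁ * Real.cos θ - θ * Real.sin θ)))
        (sSup ((fun x => |f s x| / Real.cos (θ * x)) '' Set.Ioo 0 1) /
          (κstar * θ ^ 2 - ζ)) :=
    fun s _ => (le_max_right _ _).trans (le_max_left _ _)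
  have hMf' : ∀ s ∈ Set.Ioc (0:ℝ) t, ∀ x ∈ Set.Ioo (0:ℝ) 1,
      |f s x| ≤ (κstar * θ ^ 2 - ζ) *
        (max (max (|d₀ s| / lam₀) (|d₁ s| / (lam₁ * Real.cos θ - θ * Real.sin θ)))
          (sSup ((fun x => |f s x| / Real.cos (θ * x)) '' Set.Ioo 0 1) /
            (κstar * θ ^ 2 - ζ))) * Real.cos (θ * x) := by
    intro s hs x hx
    have hsT : s ∈ Set.Icc (0:ℝ) T := ⟨hs.1.le, hs.2.trans ht.2⟩
    have hxI : x ∈ Set.Icc (0:ℝ) 1 := ⟨hx.1.le, hx.2.le⟩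
    have h1 : |f s x| / Real.cos (θ * x) ≤
        sSup ((fun x => |f s x| / Real.cos (θ * x)) '' Set.Ioo 0 1) :=
      le_csSup (hfbdd s hsT) ⟨x, hx, rfl⟩
    have h3 : sSup ((fun x => |f s x| / Real.cos (θ * x)) '' Set.Ioo 0 1) /
        (κstar * θ ^ 2 - ζ) ≤
        max (max (|d₀ s| / lam₀) (|d₁ s| / (lam₁ * Real.cos θ - θ * Real.sin θ)))
          (sSup ((fun x => |f s x| / Real.cos (θ * x)) '' Set.Ioo 0 1) /
            (κstar * θ ^ 2 - ζ)) := le_max_right _ _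
    rw [div_le_iff₀ hd2] at h3
    rw [div_le_iff₀ (hηpos x hxI)] at h1
    calc |f s x| ≤ sSup ((fun x => |f s x| / Real.cos (θ * x)) '' Set.Ioo 0 1) *
          Real.cos (θ * x) := h1
      _ ≤ (max (max (|d₀ s| / lam₀) (|d₁ s| / (lam₁ * Real.cos θ - θ * Real.sin θ)))
            (sSup ((fun x => |f s x| / Real.cos (θ * x)) '' Set.Ioo 0 1) /
              (κstar * θ ^ 2 - ζ)) * (κstar * θ ^ 2 - ζ)) * Real.cos (θ * x) :=
          mul_le_mul_of_nonneg_right h3 (hηpos x hxI).le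
      _ = _ := by ring
  have hKW : Real.exp (-ζ * t) * W0 ≤ max (Real.exp (-ζ * t) * W0) S := le_max_left _ _
  have hKM : ∀ s ∈ Set.Ioc (0:ℝ) t,
      max (max (|d₀ s| / lam₀) (|d₁ s| / (lam₁ * Real.cos θ - θ * Real.sin θ)))
        (sSup ((fun x => |f s x| / Real.cos (θ * x)) '' Set.Ioo 0 1) /
          (κstar * θ ^ 2 - ζ)) * Real.exp (-ζ * (t - s)) ≤
      max (Real.exp (-ζ * t) * W0) S := by
    intro s hs
    refine le_trans ?_ (le_max_right _ _)
    rw [hSdef]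
    exact le_csSup hSbdd ⟨s, hs, rfl⟩
  -- PDE and BC inequalities for u
  have hpde'u : ∀ s ∈ Set.Ioc (0:ℝ) T, ∀ x ∈ Set.Icc (0:ℝ) 1,
      0 < u s x → uxx s x ≤ -(θ ^ 2) * u s x →
      ut s x ≤ -(κstar * θ ^ 2) * u s x + |f s x| := by
    intro s hs x hx hpos hxx
    have h := hpde s hs x hx
    have hxx0 : uxx s x ≤ 0 := le_trans hxx (by nlinarith [sq_nonneg θ])
    have h1 : κ (u s) * uxx s x ≤ κstar * uxx s x :=
      mul_le_mul_of_nonpos_right (hκ (u s)) hxx0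
    have h2 : κstar * uxx s x ≤ κstar * (-(θ ^ 2) * u s x) :=
      mul_le_mul_of_nonneg_left hxx hκstar.le
    calc ut s x = κ (u s) * uxx s x + f s x := h
      _ ≤ κstar * (-(θ ^ 2) * u s x) + |f s x| := by
          linarith [le_abs_self (f s x)]
      _ = -(κstar * θ ^ 2) * u s x + |f s x| := by ring
  have hbc0u : ∀ s ∈ Set.Ioc (0:ℝ) T, 0 < u s 0 → lam₀ * u s 0 ≤ ux s 0 + |d₀ s| := by
    intro s hs hpos
    have h := (hbc s hs).1
    nlinarith [mul_nonneg (hβ₀ (u s)) hpos.le, neg_abs_le (d₀ s)]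
  have hbc1u : ∀ s ∈ Set.Ioc (0:ℝ) T, 0 < u s 1 → ux s 1 ≤ -(lam₁ * u s 1) + |d₁ s| := by
    intro s hs hpos
    have h := (hbc s hs).2
    nlinarith [mul_nonneg (hβ₁ (u s)) hpos.le, le_abs_self (d₁ s)]
  have hposSide := oneSided T t κstar ζ θ lam₀ lam₁ ht hθ hζ hlam₀ hc₁ d₀ d₁ f u ut ux uxx
    hu_cont hut hux huxx hpde'u hbc0u hbc1u W0 hW0nn
    (fun x hx => le_trans (le_abs_self _) (hW0u x hx))
    (fun s => max (max (|d₀ s| / lam₀) (|d₁ s| / (lam₁ * Real.cos θ - θ * Real.sin θ)))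
        (sSup ((fun x => |f s x| / Real.cos (θ * x)) '' Set.Ioo 0 1) /
          (κstar * θ ^ 2 - ζ)))
    hM0' hM1' hMf' (max (Real.exp (-ζ * t) * W0) S) hKW hKM
  -- negated solution
  have hpde'n : ∀ s ∈ Set.Ioc (0:ℝ) T, ∀ x ∈ Set.Icc (0:ℝ) 1,
      0 < -u s x → -uxx s x ≤ -(θ ^ 2) * -u s x →
      -ut s x ≤ -(κstar * θ ^ 2) * -u s x + |(-(f s x))| := by
    intro s hs x hx hpos hxx
    rw [abs_neg]
    have h := hpde s hs x hx
    have hxx0 : -uxx s x ≤ 0 := le_trans hxx (by nlinarith [sq_nonneg θ])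
    have h1 : κ (u s) * -uxx s x ≤ κstar * -uxx s x :=
      mul_le_mul_of_nonpos_right (hκ (u s)) hxx0
    have h2 : κstar * -uxx s x ≤ κstar * (-(θ ^ 2) * -u s x) :=
      mul_le_mul_of_nonneg_left hxx hκstar.le
    calc -ut s x = κ (u s) * -uxx s x + -f s x := by rw [h]; ring
      _ ≤ κstar * (-(θ ^ 2) * -u s x) + |f s x| := by
          linarith [neg_le_abs (f s x)]
      _ = -(κstar * θ ^ 2) * -u s x + |f s x| := by ring
  have hbc0n : ∀ s ∈ Set.Ioc (0:ℝ) T, 0 < -u s 0 →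
      lam₀ * -u s 0 ≤ -ux s 0 + |d₀ s| := by
    intro s hs hpos
    have h := (hbc s hs).1
    nlinarith [mul_nonneg (hβ₀ (u s)) (by linarith : (0:ℝ) ≤ -u s 0), le_abs_self (d₀ s)]
  have hbc1n : ∀ s ∈ Set.Ioc (0:ℝ) T, 0 < -u s 1 →
      -ux s 1 ≤ -(lam₁ * -u s 1) + |d₁ s| := by
    intro s hs hpos
    have h := (hbc s hs).2
    nlinarith [mul_nonneg (hβ₁ (u s)) (by linarith : (0:ℝ) ≤ -u s 1), neg_abs_le (d₁ s)]
  have hMf'n : ∀ s ∈ Set.Ioc (0:ℝ) t, ∀ x ∈ Set.Ioo (0:ℝ) 1,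
      |(-(f s x))| ≤ (κstar * θ ^ 2 - ζ) *
        (max (max (|d₀ s| / lam₀) (|d₁ s| / (lam₁ * Real.cos θ - θ * Real.sin θ)))
          (sSup ((fun x => |f s x| / Real.cos (θ * x)) '' Set.Ioo 0 1) /
            (κstar * θ ^ 2 - ζ))) * Real.cos (θ * x) := by
    intro s hs x hx
    rw [abs_neg]
    exact hMf' s hs x hx
  have hnegSide := oneSided T t κstar ζ θ lam₀ lam₁ ht hθ hζ hlam₀ hc₁ d₀ d₁
    (fun s x => -f s x) (fun s x => -u s x) (fun s x => -ut s x)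
    (fun s x => -ux s x) (fun s x => -uxx s x)
    hu_cont.neg
    (fun a ha x hx => (hut a ha x hx).neg)
    (fun a ha x hx => (hux a ha x hx).neg)
    (fun a ha x hx => (huxx a ha x hx).neg)
    hpde'n hbc0n hbc1n W0 hW0nn
    (fun x hx => le_trans (neg_le_abs _) (hW0u x hx))
    (fun s => max (max (|d₀ s| / lam₀) (|d₁ s| / (lam₁ * Real.cos θ - θ * Real.sin θ)))
        (sSup ((fun x => |f s x| / Real.cos (θ * x)) '' Set.Ioo 0 1) /
          (κstar * θ ^ 2 - ζ)))
    hM0' hM1' hMf'n (max (Real.exp (-ζ * t) * W0) S) hKW hKM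
  -- conclusion
  refine csSup_le ⟨_, ⟨0, ⟨le_rfl, zero_le_one⟩, rfl⟩⟩ ?_
  rintro y ⟨x, hx, rfl⟩
  have h1 : u t x ≤ max (Real.exp (-ζ * t) * W0) S * Real.cos (θ * x) := hposSide x hx
  have h2 : -u t x ≤ max (Real.exp (-ζ * t) * W0) S * Real.cos (θ * x) := hnegSide x hx
  have h3 : |u t x| ≤ max (Real.exp (-ζ * t) * W0) S * Real.cos (θ * x) :=
    abs_le.mpr ⟨by linarith, h1⟩
  rw [div_le_iff₀ (hηpos x hx)]
  exact h3
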